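/- arXiv:2603.09864 — 5 statements merged into one kernel-verified Lean document; each statement's English description precedes it below -/
import Mathlib

section
/- Let K ⊆ ℝ^d be a closed convex cone and let E ⊆ {1,…,d}. Then the dual cone of proj_{ℝ^E}(K) equals the closure of supp_E(K*); in particular, supp_E(K*) ⊆ (proj_{ℝ^E}(K))* and (proj_{ℝ^E}(K))* ⊆ closure(supp_E(K*)). -/
/-- Let `K ⊆ ℝ^d` be a (nonempty) closed convex cone and `E ⊆ {1,…,d}`.
Then the dual cone of `proj_{ℝ^E}(K)` equals the closure of
`supp_E(K*) = proj_{ℝ^E}(K* ∩ H_E)`; in particular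
`supp_E(K*) ⊆ (proj_{ℝ^E}(K))*` and `(proj_{ℝ^E}(K))* ⊆ closure (supp_E(K*))`. -/
theorem stmt_2 (d : ℕ) (K : Set (Fin d → ℝ))
    (hKcl : IsClosed K) (hKconv : Convex ℝ K)
    (hKcone : ∀ x ∈ K, ∀ t : ℝ, 0 ≤ t → t • x ∈ K)
    (hKne : K.Nonempty)
    (E : Finset (Fin d)) :
    ({c : E → ℝ | ∀ z ∈ {z : E → ℝ | ∃ x ∈ K, ∀ i : E, x i = z i},
        0 ≤ ∑ i : E, c i * z i} =
      closure {c : E → ℝ | ∃ cbar : Fin d → ℝ,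
        (∀ x ∈ K, 0 ≤ ∑ i, cbar i * x i) ∧
        (∀ i ∉ E, cbar i = 0) ∧ (∀ i : E, cbar i = c i)}) ∧
    ({c : E → ℝ | ∃ cbar : Fin d → ℝ,
        (∀ x ∈ K, 0 ≤ ∑ i, cbar i * x i) ∧
        (∀ i ∉ E, cbar i = 0) ∧ (∀ i : E, cbar i = c i)} ⊆
      {c : E → ℝ | ∀ z ∈ {z : E → ℝ | ∃ x ∈ K, ∀ i : E, x i = z i},
        0 ≤ ∑ i : E, c i * z i}) ∧
    ({c : E → ℝ | ∀ z ∈ {z : E → ℝ | ∃ x ∈ K, ∀ i : E, x i = z i},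
        0 ≤ ∑ i : E, c i * z i} ⊆
      closure {c : E → ℝ | ∃ cbar : Fin d → ℝ,
        (∀ x ∈ K, 0 ≤ ∑ i, cbar i * x i) ∧
        (∀ i ∉ E, cbar i = 0) ∧ (∀ i : E, cbar i = c i)}) := by
  set A := {c : E → ℝ | ∀ z ∈ {z : E → ℝ | ∃ x ∈ K, ∀ i : E, x i = z i},
        0 ≤ ∑ i : E, c i * z i} with hA
  set S := {c : E → ℝ | ∃ cbar : Fin d → ℝ,
        (∀ x ∈ K, 0 ≤ ∑ i, cbar i * x i) ∧
        (∀ i ∉ E, cbar i = 0) ∧ (∀ i : E, cbar i = c i)} with hS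
  have key : ∀ (cbar : Fin d → ℝ) (x : Fin d → ℝ), (∀ i ∉ E, cbar i = 0) →
      ∑ i, cbar i * x i = ∑ i : E, cbar (i : Fin d) * x (i : Fin d) := by
    intro cbar x h0
    rw [← Finset.sum_subset (Finset.subset_univ E)
      (by intro i _ hi; rw [h0 i hi]; ring)]
    rw [Finset.sum_coe_sort E (fun i => cbar i * x i)]
  have hSA : S ⊆ A := by
    rintro c ⟨cbar, hdual, h0, hres⟩ z ⟨x, hx, hxz⟩
    have h1 := hdual x hx
    rw [key cbar x h0] at h1
    calc (0:ℝ) ≤ ∑ i : E, cbar (i : Fin d) * x (i : Fin d) := h1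
    _ = ∑ i : E, c i * z i := by
      apply Finset.sum_congr rfl; intro i _; rw [hres i, hxz i]
  have hAS : A ⊆ S := by
    intro c hc
    refine ⟨fun i => if h : i ∈ E then c ⟨i, h⟩ else 0, ?_, ?_, ?_⟩
    · intro x hx
      rw [key _ x (fun i hi => dif_neg hi)]
      have h2 := hc (fun i => x i) ⟨x, hx, fun i => rfl⟩
      convert h2 using 1
      apply Finset.sum_congr rfl; intro i _
      rw [dif_pos i.2]
    · intro i hi; exact dif_neg hi
    · intro i; exact dif_pos i.2
  have hSeq : S = A := Set.Subset.antisymm hSA hAS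
  have hAcl : IsClosed A := by
    have hrep : A = ⋂ z ∈ {z : E → ℝ | ∃ x ∈ K, ∀ i : E, x i = z i},
        {c : E → ℝ | 0 ≤ ∑ i : E, c i * z i} := by
      ext c; simp only [hA, Set.mem_iInter, Set.mem_setOf_eq]
    rw [hrep]
    exact isClosed_biInter fun z _ => isClosed_le continuous_const
      (continuous_finset_sum _ fun i _ => (continuous_apply i).mul continuous_const)
  have hfin : closure S = A := by rw [hSeq, hAcl.closure_eq]
  exact ⟨hfin.symm, hSA, by rw [hfin]⟩
end

section
/- Let Ẑ ∈ ℝ^E with Ẑ ≥ 0 entrywise, where E is a symmetric index set containing the diagonal. Then the optimization problem min ⟨A_E, Ẑ⟩ over matrices C ⪰ 0 and A with A ≥ C entrywise, A_{ij} = 0 for (i,j) ∉ E, and ‖diag(A)‖₁ ≤ 1, has the same optimal value as min ⟨C_E, Ẑ⟩ over C ⪰ 0 with C_{ij} ≤ 0 for all (i,j) ∉ E and ‖diag(C)‖₁ ≤ 1. -/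
open Matrix

lemma psd_diag' {m : ℕ} {C : Matrix (Fin m) (Fin m) ℝ} (hC : C.PosSemidef) (i : Fin m) :
    0 ≤ C i i := by
  have := hC.dotProduct_mulVec_nonneg (Pi.single i 1)
  simpa [Matrix.mulVec_single, dotProduct, Pi.single_apply] using this

lemma psd_off' {m : ℕ} {C : Matrix (Fin m) (Fin m) ℝ} (hC : C.PosSemidef) (i j : Fin m)
    (hij : i ≠ j) : 0 ≤ C i i + C j j + 2 * C i j := by
  have hsymm : C j i = C i j := by
    have := congrFun (congrFun hC.1.symm j) i
    simpa [Matrix.conjTranspose_apply] using this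
  have h := hC.dotProduct_mulVec_nonneg (Pi.single i 1 + Pi.single j 1)
  simp only [Matrix.mulVec_add, Matrix.mulVec_single, dotProduct,
    Pi.add_apply, Pi.single_apply, star_trivial, add_mul, mul_add, ite_mul, one_mul, zero_mul,
    Finset.sum_add_distrib, Finset.sum_ite_eq', Finset.mem_univ, if_true, mul_one, mul_zero] at h
  simp [hij, hij.symm, hsymm] at h
  linarith

lemma entry_lb' {m : ℕ} {C : Matrix (Fin m) (Fin m) ℝ} (hC : C.PosSemidef)
    (hd : ∑ i, |C i i| ≤ 1) (i j : Fin m) : -1 ≤ C i j := by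
  rcases eq_or_ne i j with rfl | hij
  · have := psd_diag' hC i; linarith
  · have ho := psd_off' hC i j hij
    have h2 : |C i i| + |C j j| ≤ ∑ k, |C k k| := by
      have := Finset.sum_le_sum_of_subset_of_nonneg (Finset.subset_univ {i, j})
        (fun k _ _ => abs_nonneg (C k k))
      simpa [Finset.sum_pair hij] using this
    rw [abs_of_nonneg (psd_diag' hC i), abs_of_nonneg (psd_diag' hC j)] at h2
    linarith

/-- The two formulations of the E-DNN separation problem have the same optimal
value: minimizing `⟨A_E, Ẑ⟩` over `C ⪰ 0`, `A ≥ C` entrywise, `A` supported on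
`E`, `‖diag(A)‖₁ ≤ 1` equals minimizing `⟨C_E, Ẑ⟩` over `C ⪰ 0` with
`C_{ij} ≤ 0` off `E` and `‖diag(C)‖₁ ≤ 1`, provided `Ẑ ≥ 0`. -/
theorem stmt_10 (n : ℕ) (E : Finset (Fin (n+1) × Fin (n+1)))
    (hdiag : ∀ i, (i, i) ∈ E) (hsym : ∀ p ∈ E, (p.2, p.1) ∈ E)
    (Zhat : E → ℝ) (hZ : ∀ p : E, 0 ≤ Zhat p) :
    sInf {v : ℝ | ∃ A C : Matrix (Fin (n+1)) (Fin (n+1)) ℝ,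
        C.PosSemidef ∧ (∀ i j, C i j ≤ A i j) ∧
        (∀ p : Fin (n+1) × Fin (n+1), p ∉ E → A p.1 p.2 = 0) ∧
        (∑ i, |A i i|) ≤ 1 ∧ v = ∑ p : E, A p.1.1 p.1.2 * Zhat p} =
      sInf {v : ℝ | ∃ C : Matrix (Fin (n+1)) (Fin (n+1)) ℝ,
        C.PosSemidef ∧ (∀ p : Fin (n+1) × Fin (n+1), p ∉ E → C p.1 p.2 ≤ 0) ∧
        (∑ i, |C i i|) ≤ 1 ∧ v = ∑ p : E, C p.1.1 p.1.2 * Zhat p} := by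
  set S1 : Set ℝ := {v : ℝ | ∃ A C : Matrix (Fin (n+1)) (Fin (n+1)) ℝ,
        C.PosSemidef ∧ (∀ i j, C i j ≤ A i j) ∧
        (∀ p : Fin (n+1) × Fin (n+1), p ∉ E → A p.1 p.2 = 0) ∧
        (∑ i, |A i i|) ≤ 1 ∧ v = ∑ p : E, A p.1.1 p.1.2 * Zhat p} with hS1
  set S2 : Set ℝ := {v : ℝ | ∃ C : Matrix (Fin (n+1)) (Fin (n+1)) ℝ,
        C.PosSemidef ∧ (∀ p : Fin (n+1) × Fin (n+1), p ∉ E → C p.1 p.2 ≤ 0) ∧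
        (∑ i, |C i i|) ≤ 1 ∧ v = ∑ p : E, C p.1.1 p.1.2 * Zhat p} with hS2
  -- lower bound for values coming from a feasible C
  have key : ∀ C : Matrix (Fin (n+1)) (Fin (n+1)) ℝ, C.PosSemidef → (∑ i, |C i i|) ≤ 1 →
      -(∑ p : E, Zhat p) ≤ ∑ p : E, C p.1.1 p.1.2 * Zhat p := by
    intro C hC hd
    rw [← Finset.sum_neg_distrib]
    apply Finset.sum_le_sum
    intro p _
    have := mul_le_mul_of_nonneg_right (entry_lb' hC hd p.1.1 p.1.2) (hZ p)
    linarith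
  have hbdd1 : BddBelow S1 := by
    refine ⟨-(∑ p : E, Zhat p), fun v hv => ?_⟩
    obtain ⟨A, C, hC, hCA, hsupp, hda, rfl⟩ := hv
    have hdc : (∑ i, |C i i|) ≤ 1 := by
      refine le_trans (Finset.sum_le_sum fun i _ => ?_) hda
      rw [abs_of_nonneg (psd_diag' hC i)]
      exact le_trans (hCA i i) (le_abs_self _)
    refine le_trans (key C hC hdc) (Finset.sum_le_sum fun p _ => ?_)
    exact mul_le_mul_of_nonneg_right (hCA p.1.1 p.1.2) (hZ p)
  have hbdd2 : BddBelow S2 := by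
    refine ⟨-(∑ p : E, Zhat p), fun v hv => ?_⟩
    obtain ⟨C, hC, _, hd, rfl⟩ := hv
    exact key C hC hd
  have hsub : S2 ⊆ S1 := by
    intro v hv
    obtain ⟨C, hC, hoff, hd, rfl⟩ := hv
    refine ⟨fun i j => if (i, j) ∈ E then C i j else 0, C, hC, ?_, ?_, ?_, ?_⟩
    · intro i j
      by_cases h : (i, j) ∈ E
      · simp [h]
      · simpa [h] using hoff (i, j) h
    · intro p hp
      simp [hp]
    · simpa [hdiag] using hd
    · refine Finset.sum_congr rfl fun p _ => ?_
      have : (p.1.1, p.1.2) ∈ E := by simpa using p.2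
      simp [this]
  have hne2 : S2.Nonempty := by
    refine ⟨0, 0, Matrix.PosSemidef.zero, ?_, ?_, ?_⟩ <;> simp
  refine le_antisymm (csInf_le_csInf hbdd1 hne2 hsub) ?_
  refine le_csInf (hne2.mono hsub) ?_
  intro v hv
  obtain ⟨A, C, hC, hCA, hsupp, hda, rfl⟩ := hv
  have hdc : (∑ i, |C i i|) ≤ 1 := by
    refine le_trans (Finset.sum_le_sum fun i _ => ?_) hda
    rw [abs_of_nonneg (psd_diag' hC i)]
    exact le_trans (hCA i i) (le_abs_self _)
  have hmem : (∑ p : E, C p.1.1 p.1.2 * Zhat p) ∈ S2 := by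
    refine ⟨C, hC, fun p hp => ?_, hdc, rfl⟩
    have := hCA p.1 p.2
    rw [hsupp p hp] at this
    exact this
  refine le_trans (csInf_le hbdd2 hmem) (Finset.sum_le_sum fun p _ => ?_)
  exact mul_le_mul_of_nonneg_right (hCA p.1.1 p.1.2) (hZ p)
end

section
/- For any (n+1)×(n+1) positive semidefinite matrix Y and any indices i, j, one has |Y_{ij}| ≤ √(Y_{ii} Y_{jj}) ≤ (Y_{ii} + Y_{jj})/2. Consequently, the set of PSD matrices with trace at most 1 is compact, and hence for any symmetric index set E containing the diagonal, the projection proj_{ℝ^E}(S⁺) of the PSD cone onto the coordinates in E is a closed convex cone. -/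
open Matrix

private lemma entry_cont {m : ℕ} (k l : Fin m) :
    Continuous fun Y : Matrix (Fin m) (Fin m) ℝ => Y k l :=
  (continuous_apply l).comp (continuous_apply k)

private lemma psd_diag_nonneg {m : ℕ} {Y : Matrix (Fin m) (Fin m) ℝ}
    (hY : Y.PosSemidef) (i : Fin m) : 0 ≤ Y i i := by
  have h := hY.dotProduct_mulVec_nonneg (Pi.single i 1)
  simpa [dotProduct, mulVec, Pi.single_apply] using h

private lemma psd_quad {n : ℕ} {Y : Matrix (Fin (n+1)) (Fin (n+1)) ℝ}
    (hY : Y.PosSemidef) (i j : Fin (n+1)) (t : ℝ) :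
    0 ≤ Y j j * (t * t) + (2 * Y i j) * t + Y i i := by
  have h := hY.dotProduct_mulVec_nonneg (fun k => (if k = i then (1:ℝ) else 0) + t * (if k = j then 1 else 0))
  have hsym : Y j i = Y i j := by simpa using (hY.1.apply j i).symm
  simp only [star_trivial] at h
  rcases eq_or_ne i j with rfl | hij
  · have hd := psd_diag_nonneg hY i
    nlinarith [sq_nonneg (1 + t)]
  · have key : (fun k => (if k = i then (1:ℝ) else 0) + t * (if k = j then 1 else 0)) ⬝ᵥ
        Y *ᵥ (fun k => (if k = i then (1:ℝ) else 0) + t * (if k = j then 1 else 0))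
        = Y i i + t * Y i j + (t * Y j i + t * (t * Y j j)) := by
      simp [dotProduct, mulVec, mul_add, add_mul, mul_ite, ite_mul, Finset.sum_add_distrib,
        Finset.mul_sum, Finset.sum_ite_eq', hij, hij.symm]
      ring
    rw [key] at h
    rw [hsym] at h
    linarith

private lemma psd_abs_le_sqrt {n : ℕ} {Y : Matrix (Fin (n+1)) (Fin (n+1)) ℝ}
    (hY : Y.PosSemidef) (i j : Fin (n+1)) :
    |Y i j| ≤ Real.sqrt (Y i i * Y j j) := by
  have hd := discrim_le_zero (a := Y j j) (b := 2 * Y i j) (c := Y i i)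
    (fun t => psd_quad hY i j t)
  rw [discrim] at hd
  have h2 : Y i j ^ 2 ≤ Y i i * Y j j := by nlinarith
  calc |Y i j| = Real.sqrt ((Y i j) ^ 2) := (Real.sqrt_sq_eq_abs _).symm
    _ ≤ Real.sqrt (Y i i * Y j j) := Real.sqrt_le_sqrt h2

private lemma sqrt_le_half_add {a b : ℝ} (ha : 0 ≤ a) (hb : 0 ≤ b) :
    Real.sqrt (a * b) ≤ (a + b) / 2 := by
  have h : a * b ≤ ((a + b) / 2) ^ 2 := by nlinarith [sq_nonneg (a - b)]
  calc Real.sqrt (a * b) ≤ Real.sqrt (((a + b) / 2) ^ 2) := Real.sqrt_le_sqrt h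
    _ = |(a + b) / 2| := Real.sqrt_sq_eq_abs _
    _ = (a + b) / 2 := abs_of_nonneg (by linarith)

private lemma isClosed_psd (m : ℕ) :
    IsClosed {Y : Matrix (Fin m) (Fin m) ℝ | Y.PosSemidef} := by
  have : {Y : Matrix (Fin m) (Fin m) ℝ | Y.PosSemidef} =
      (⋂ i, ⋂ j, {Y : Matrix (Fin m) (Fin m) ℝ | Y j i = Y i j}) ∩
      (⋂ x : Fin m → ℝ, {Y : Matrix (Fin m) (Fin m) ℝ | 0 ≤ star x ⬝ᵥ Y *ᵥ x}) := by
    ext Y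
    simp only [Set.mem_setOf_eq, Set.mem_inter_iff, Set.mem_iInter]
    constructor
    · exact fun h => ⟨fun i j => by simpa using (h.1.apply j i).symm, h.dotProduct_mulVec_nonneg⟩
    · intro ⟨h1, h2⟩
      exact Matrix.PosSemidef.of_dotProduct_mulVec_nonneg (Matrix.ext fun i j => by simpa using h1 i j) h2
  rw [this]
  apply IsClosed.inter
  · exact isClosed_iInter fun i => isClosed_iInter fun j =>
      isClosed_eq (entry_cont j i) (entry_cont i j)
  · refine isClosed_iInter fun x => isClosed_le continuous_const ?_
    have : (fun Y : Matrix (Fin m) (Fin m) ℝ => star x ⬝ᵥ Y *ᵥ x) =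
        fun Y => ∑ k, star (x k) * ∑ l, Y k l * x l := by
      funext Y; rfl
    rw [this]
    exact continuous_finset_sum _ fun k _ => continuous_const.mul
      (continuous_finset_sum _ fun l _ => (entry_cont k l).mul continuous_const)

private lemma cont_trace (m : ℕ) :
    Continuous fun Y : Matrix (Fin m) (Fin m) ℝ => Y.trace := by
  have : (fun Y : Matrix (Fin m) (Fin m) ℝ => Y.trace) = fun Y => ∑ i, Y i i := by
    funext Y; rfl
  rw [this]
  exact continuous_finset_sum _ fun i _ => entry_cont i i

private lemma psd_entry_le_trace {n : ℕ} {Y : Matrix (Fin (n+1)) (Fin (n+1)) ℝ}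
    (hY : Y.PosSemidef) (i j : Fin (n+1)) : |Y i j| ≤ Y.trace := by
  have hdiag : ∀ k, Y k k ≤ Y.trace := by
    intro k
    have : Y k k ≤ ∑ l, Y l l :=
      Finset.single_le_sum (fun l _ => psd_diag_nonneg hY l) (Finset.mem_univ k)
    simpa [Matrix.trace, Matrix.diag] using this
  calc |Y i j| ≤ Real.sqrt (Y i i * Y j j) := psd_abs_le_sqrt hY i j
    _ ≤ (Y i i + Y j j) / 2 := sqrt_le_half_add (psd_diag_nonneg hY i) (psd_diag_nonneg hY j)
    _ ≤ Y.trace := by have := hdiag i; have := hdiag j; linarith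

private lemma compact_psd_trace_le (n : ℕ) (C : ℝ) :
    IsCompact {Y : Matrix (Fin (n+1)) (Fin (n+1)) ℝ | Y.PosSemidef ∧ Y.trace ≤ C} := by
  refine IsCompact.of_isClosed_subset
    (s := Set.univ.pi fun _ : Fin (n+1) => Set.univ.pi fun _ : Fin (n+1) => Set.Icc (-C) C)
    (isCompact_univ_pi fun _ => isCompact_univ_pi fun _ => isCompact_Icc) ?_ ?_
  · exact (isClosed_psd _).inter (isClosed_le (cont_trace _) continuous_const)
  · rintro Y ⟨hY, htr⟩
    intro i _
    intro j _
    have h := (psd_entry_le_trace hY i j).trans htr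
    exact abs_le.1 h

/-- For any PSD matrix `Y`, `|Y_{ij}| ≤ √(Y_{ii} Y_{jj}) ≤ (Y_{ii} + Y_{jj})/2`;
consequently the set of PSD matrices with trace at most 1 is compact, and for
any symmetric index set `E` containing the diagonal, the projection of the PSD
cone onto the coordinates in `E` is closed. -/
theorem stmt_13 (n : ℕ) :
    (∀ Y : Matrix (Fin (n+1)) (Fin (n+1)) ℝ, Y.PosSemidef → ∀ i j,
      |Y i j| ≤ Real.sqrt (Y i i * Y j j) ∧
      Real.sqrt (Y i i * Y j j) ≤ (Y i i + Y j j) / 2) ∧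
    IsCompact {Y : Matrix (Fin (n+1)) (Fin (n+1)) ℝ | Y.PosSemidef ∧ Y.trace ≤ 1} ∧
    (∀ E : Finset (Fin (n+1) × Fin (n+1)),
      (∀ i, (i, i) ∈ E) → (∀ p ∈ E, (p.2, p.1) ∈ E) →
      IsClosed {Z : E → ℝ | ∃ Y : Matrix (Fin (n+1)) (Fin (n+1)) ℝ,
        Y.PosSemidef ∧ ∀ p : E, Z p = Y p.1.1 p.1.2}) := by
  refine ⟨fun Y hY i j => ⟨psd_abs_le_sqrt hY i j,
    sqrt_le_half_add (psd_diag_nonneg hY i) (psd_diag_nonneg hY j)⟩,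
    compact_psd_trace_le n 1, ?_⟩
  intro E hdiag _hsym
  apply IsSeqClosed.isClosed
  intro Z L hZ hL
  choose Y hYpsd hYe using hZ
  have htr : ∀ k, (Y k).trace = ∑ i, Z k ⟨(i, i), hdiag i⟩ := by
    intro k
    simp only [Matrix.trace, Matrix.diag]
    exact Finset.sum_congr rfl fun i _ => (hYe k ⟨(i, i), hdiag i⟩).symm
  have hlim : Filter.Tendsto (fun k => ∑ i, Z k ⟨(i, i), hdiag i⟩) Filter.atTop
      (nhds (∑ i, L ⟨(i, i), hdiag i⟩)) :=
    tendsto_finset_sum _ fun i _ => (tendsto_pi_nhds.1 hL _)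
  obtain ⟨C, hC⟩ := hlim.bddAbove_range
  have hmem : ∀ k, Y k ∈
      {Y : Matrix (Fin (n+1)) (Fin (n+1)) ℝ | Y.PosSemidef ∧ Y.trace ≤ C} := by
    intro k
    exact ⟨hYpsd k, by rw [htr k]; exact hC ⟨k, rfl⟩⟩
  haveI : FirstCountableTopology (Matrix (Fin (n+1)) (Fin (n+1)) ℝ) :=
    inferInstanceAs (FirstCountableTopology (Fin (n+1) → Fin (n+1) → ℝ))
  obtain ⟨W, ⟨hWpsd, _⟩, φ, hφ, hconv⟩ := (compact_psd_trace_le n C).tendsto_subseq hmem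
  refine ⟨W, hWpsd, fun p => ?_⟩
  have h1 : Filter.Tendsto (fun k => Y (φ k) p.1.1 p.1.2) Filter.atTop
      (nhds (W p.1.1 p.1.2)) := ((entry_cont p.1.1 p.1.2).tendsto W).comp hconv
  have h2 : Filter.Tendsto (fun k => Z (φ k) p) Filter.atTop (nhds (L p)) :=
    (tendsto_pi_nhds.1 hL p).comp hφ.tendsto_atTop
  have heq : (fun k => Z (φ k) p) = fun k => Y (φ k) p.1.1 p.1.2 :=
    funext fun k => hYe (φ k) p
  rw [heq] at h2
  exact tendsto_nhds_unique h2 h1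
end

section
/- Let E be a symmetric set of index pairs of an (n+1)×(n+1) symmetric matrix containing all diagonal pairs. Let Q⁰,…,Qᵐ be symmetric matrices each supported on E (Q^k_{ij} = 0 for (i,j) ∉ E), and let 𝒴 be a set of symmetric matrices defined by linear conditions involving only entries in E. Define z^SDP = inf{⟨Q⁰, Y⟩ : Y ∈ 𝒴, ⟨Q^k, Y⟩ ≤ 0 for k=1,…,m, Y ⪰ 0} and z^{SDP-E} = inf{⟨Q⁰, Y⟩ : Y ∈ 𝒴, ⟨Q^k, Y⟩ ≤ 0 for k=1,…,m, ⟨C, Y⟩ ≥ 0 for all PSD C supported on E}. Then z^SDP = z^{SDP-E}. -/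
open Matrix

set_option linter.unusedSectionVars false

namespace Stmt15

variable {ι : Type*} [Fintype ι] [DecidableEq ι]

lemma trace_form (A B : Matrix ι ι ℝ) :
    (Aᵀ * B).trace = ∑ p : ι × ι, A p.1 p.2 * B p.1 p.2 := by
  rw [Fintype.sum_prod_type, Matrix.trace]
  simp only [Matrix.diag, Matrix.mul_apply, Matrix.transpose_apply]
  exact Finset.sum_comm

lemma trace_eq_of_agree (E : Finset (ι × ι)) (A B B' : Matrix ι ι ℝ)
    (hA : ∀ p : ι × ι, p ∉ E → A p.1 p.2 = 0)
    (hBB' : ∀ p ∈ E, B p.1 p.2 = B' p.1 p.2) :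
    (Aᵀ * B).trace = (Aᵀ * B').trace := by
  rw [trace_form, trace_form]
  refine Finset.sum_congr rfl fun p _ => ?_
  by_cases hp : p ∈ E
  · rw [hBB' p hp]
  · rw [hA p hp, zero_mul, zero_mul]

lemma quad_form (C : Matrix ι ι ℝ) (v : ι → ℝ) :
    v ⬝ᵥ (C *ᵥ v) = ∑ p : ι × ι, C p.1 p.2 * (v p.1 * v p.2) := by
  rw [Fintype.sum_prod_type]
  simp only [dotProduct, mulVec, Finset.mul_sum]
  exact Finset.sum_congr rfl fun i _ => Finset.sum_congr rfl fun j _ => by ring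

lemma posSemidef_vecMulVec (x : ι → ℝ) : (vecMulVec x x).PosSemidef := by
  refine posSemidef_iff_dotProduct_mulVec.mpr ⟨?_, ?_⟩
  · ext i j
    simp [vecMulVec_apply, conjTranspose_apply, mul_comm]
  · intro y
    have h : star y ⬝ᵥ (vecMulVec x x *ᵥ y) = (x ⬝ᵥ y) * (x ⬝ᵥ y) := by
      simp only [star_trivial]
      rw [quad_form, Fintype.sum_prod_type]
      simp only [dotProduct, vecMulVec_apply, Finset.sum_mul, Finset.mul_sum]
      exact Finset.sum_congr rfl fun i _ => Finset.sum_congr rfl fun j _ => by ring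
    rw [h]
    exact mul_self_nonneg _

/-- A symmetric real matrix with nonnegative quadratic form is PSD. -/
lemma posSemidef_of_quad (C : Matrix ι ι ℝ) (hs : C.IsSymm)
    (h : ∀ v : ι → ℝ, 0 ≤ v ⬝ᵥ (C *ᵥ v)) : C.PosSemidef := by
  refine posSemidef_iff_dotProduct_mulVec.mpr ⟨?_, ?_⟩
  · rw [Matrix.IsHermitian, conjTranspose_eq_transpose_of_trivial, hs]
  · intro v
    simpa using h v

/-- trace nonneg for product of PSD matrices. -/
lemma trace_nonneg_of_posSemidef (C Y : Matrix ι ι ℝ) (hC : C.PosSemidef)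
    (hY : Y.PosSemidef) : 0 ≤ (Cᵀ * Y).trace := by
  obtain ⟨B, rfl⟩ : ∃ B : Matrix ι ι ℝ, Y = Bᴴ * B := by
    open scoped MatrixOrder in exact CStarAlgebra.nonneg_iff_eq_star_mul_self.mp hY.nonneg
  have hCt : Cᵀ = C := by
    rw [← conjTranspose_eq_transpose_of_trivial, hC.isHermitian]
  rw [hCt]
  have h1 : (C * (Bᴴ * B)).trace = (B * C * Bᴴ).trace := by
    rw [Matrix.trace_mul_comm, Matrix.mul_assoc, Matrix.trace_mul_comm, Matrix.mul_assoc]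
  rw [h1]
  have h2 : (B * C * Bᴴ).PosSemidef := hC.mul_mul_conjTranspose_same B
  rw [Matrix.trace]
  apply Finset.sum_nonneg
  intro i _
  have := h2.dotProduct_mulVec_nonneg (Pi.single i 1)
  simpa [Matrix.diag, mulVec_single, dotProduct_single] using this


lemma psdSmul {X : Matrix ι ι ℝ} (hX : X.PosSemidef) {a : ℝ} (ha : 0 ≤ a) :
    (a • X).PosSemidef := by
  refine posSemidef_iff_dotProduct_mulVec.mpr ⟨?_, ?_⟩
  · show (a • X)ᴴ = a • X
    rw [Matrix.conjTranspose_smul, hX.1]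
    simp
  · intro v
    have : star v ⬝ᵥ (a • X) *ᵥ v = a * (star v ⬝ᵥ X *ᵥ v) := by
      rw [Matrix.smul_mulVec, dotProduct_smul]
      simp
    rw [this]
    exact mul_nonneg ha (hX.dotProduct_mulVec_nonneg v)

lemma isClosed_resSet (E : Finset (ι × ι)) (hdiag : ∀ i, (i, i) ∈ E) :
    IsClosed {y : ι × ι → ℝ | ∃ X : Matrix ι ι ℝ, X.PosSemidef ∧
      y = fun p => if p ∈ E then X p.1 p.2 else 0} := by
  apply IsSeqClosed.isClosed
  intro u y hu huy
  choose X hXpsd hXeq using hu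
  have hcoord : ∀ p : ι × ι, Filter.Tendsto (fun k => u k p) Filter.atTop (nhds (y p)) :=
    fun p => ((continuous_apply p).tendsto y).comp huy
  have hdiagconv : ∀ i : ι, Filter.Tendsto (fun k => X k i i) Filter.atTop (nhds (y (i, i))) := by
    intro i
    have : (fun k => X k i i) = fun k => u k (i, i) := by
      funext k; rw [hXeq k]; simp [hdiag i]
    rw [this]; exact hcoord (i, i)
  have hbdd : ∀ i : ι, ∃ R : ℝ, ∀ k, X k i i ≤ R := by
    intro i
    obtain ⟨R, hR⟩ := (hdiagconv i).bddAbove_range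
    exact ⟨R, fun k => hR (Set.mem_range_self k)⟩
  choose R hR using hbdd
  set B : ℝ := ∑ i : ι, max (R i) 0 with hB
  have hdiagB : ∀ k (i : ι), X k i i ≤ B := by
    intro k i
    calc X k i i ≤ R i := hR i k
      _ ≤ max (R i) 0 := le_max_left _ _
      _ ≤ B := Finset.single_le_sum (fun j _ => le_max_right (R j) 0) (Finset.mem_univ i)
  have hdiag0 : ∀ k (i : ι), 0 ≤ X k i i := by
    intro k i
    have := (hXpsd k).dotProduct_mulVec_nonneg (Pi.single i 1)
    simpa [mulVec_single, dotProduct_single] using this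
  have hsymX : ∀ k (i j : ι), X k j i = X k i j := by
    intro k i j
    have h := (hXpsd k).1
    calc X k j i = (X k)ᴴ i j := by simp [conjTranspose_apply]
      _ = X k i j := by rw [h]
  have hoff : ∀ k (i j : ι), |X k i j| ≤ B := by
    intro k i j
    have h1 := (hXpsd k).dotProduct_mulVec_nonneg (Pi.single i 1 + Pi.single j 1)
    have h2 := (hXpsd k).dotProduct_mulVec_nonneg (Pi.single i 1 - Pi.single j 1)
    simp only [star_trivial, Matrix.mulVec_add, Matrix.mulVec_sub, dotProduct_add,
      dotProduct_sub, add_dotProduct, sub_dotProduct, mulVec_single, dotProduct_single,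
      single_dotProduct, Pi.smul_apply, op_smul_eq_mul, Matrix.col_apply, mul_one, one_mul] at h1 h2
    have hji := hsymX k i j
    have hii := hdiagB k i
    have hjj := hdiagB k j
    have hi0 := hdiag0 k i
    have hj0 := hdiag0 k j
    rw [abs_le]
    constructor
    · nlinarith [hdiagB k i, hdiagB k j]
    · nlinarith [hdiagB k i, hdiagB k j]
  set K : Set (ι × ι → ℝ) := Set.univ.pi (fun _ => Set.Icc (-B) B) with hK
  have hKc : IsCompact K := isCompact_univ_pi (fun _ => isCompact_Icc)
  set w : ℕ → (ι × ι → ℝ) := fun k p => X k p.1 p.2 with hw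
  have hwK : ∀ k, w k ∈ K := by
    intro k
    rw [Set.mem_univ_pi]
    intro p
    exact Set.mem_Icc.mpr (abs_le.mp (hoff k p.1 p.2))
  obtain ⟨a, _, φ, hφ, hconv⟩ := hKc.tendsto_subseq hwK
  have hc : ∀ p : ι × ι, Filter.Tendsto (fun m => X (φ m) p.1 p.2) Filter.atTop (nhds (a p)) :=
    fun p => ((continuous_apply p).tendsto a).comp hconv
  refine ⟨Matrix.of (fun i j => a (i, j)), posSemidef_iff_dotProduct_mulVec.mpr ⟨?_, ?_⟩, ?_⟩
  · show (Matrix.of (fun i j => a (i, j)))ᴴ = _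
    ext i j
    simp only [conjTranspose_apply, Matrix.of_apply, star_trivial]
    have hfe : (fun m => X (φ m) j i) = fun m => X (φ m) i j := by
      funext m; exact hsymX (φ m) i j
    have h2 := hc (i, j)
    rw [show ((i,j) : ι × ι).1 = i from rfl, show ((i,j) : ι × ι).2 = j from rfl, ← hfe] at h2
    exact tendsto_nhds_unique (hc (j, i)) h2
  · intro v
    simp only [star_trivial]
    rw [quad_form]
    have hterm : Filter.Tendsto
        (fun m => ∑ p : ι × ι, X (φ m) p.1 p.2 * (v p.1 * v p.2)) Filter.atTop
        (nhds (∑ p : ι × ι, (Matrix.of (fun i j => a (i, j))) p.1 p.2 * (v p.1 * v p.2))) := by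
      apply tendsto_finset_sum
      intro p _
      exact ((hc p).mul_const _)
    refine ge_of_tendsto' hterm ?_
    intro m
    have := (hXpsd (φ m)).dotProduct_mulVec_nonneg v
    rw [star_trivial, quad_form] at this
    exact this
  · funext p
    have h1 : Filter.Tendsto (fun m => u (φ m) p) Filter.atTop (nhds (y p)) :=
      (hcoord p).comp hφ.tendsto_atTop
    by_cases hp : p ∈ E
    · have h2 : (fun m => u (φ m) p) = fun m => X (φ m) p.1 p.2 := by
        funext m; rw [hXeq (φ m)]; simp [hp]
      rw [h2] at h1
      simp only [hp, if_true]
      exact tendsto_nhds_unique h1 (hc p)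
    · have h2 : (fun m => u (φ m) p) = fun _ => (0 : ℝ) := by
        funext m; rw [hXeq (φ m)]; simp [hp]
      rw [h2] at h1
      simp only [hp, if_false]
      exact tendsto_nhds_unique h1 tendsto_const_nhds


lemma completion (E : Finset (ι × ι)) (hdiag : ∀ i, (i, i) ∈ E)
    (hsymE : ∀ p ∈ E, (p.2, p.1) ∈ E) (Y : Matrix ι ι ℝ) (hY : Y.IsSymm)
    (hcuts : ∀ C : Matrix ι ι ℝ, C.PosSemidef → (∀ p : ι × ι, p ∉ E → C p.1 p.2 = 0) →
      0 ≤ (Cᵀ * Y).trace) :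
    ∃ X : Matrix ι ι ℝ, X.PosSemidef ∧ ∀ p : ι × ι, p ∈ E → X p.1 p.2 = Y p.1 p.2 := by
  classical
  set s : Set (ι × ι → ℝ) := {y : ι × ι → ℝ | ∃ X : Matrix ι ι ℝ, X.PosSemidef ∧
      y = fun p => if p ∈ E then X p.1 p.2 else 0} with hs
  have hsymm_apply : ∀ (X : Matrix ι ι ℝ), X.IsSymm → ∀ i j : ι, X j i = X i j := by
    intro X hX i j
    conv_rhs => rw [← hX]
    rfl
  have hconv : Convex ℝ s := by
    rintro y1 ⟨X1, h1, rfl⟩ y2 ⟨X2, h2, rfl⟩ a b ha hb hab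
    refine ⟨a • X1 + b • X2, (psdSmul h1 ha).add (psdSmul h2 hb), ?_⟩
    funext p
    by_cases hp : p ∈ E <;> simp [hp]
  have hclosed : IsClosed s := isClosed_resSet E hdiag
  have hmem : (fun p : ι × ι => if p ∈ E then Y p.1 p.2 else 0) ∈ s := by
    by_contra hnot
    obtain ⟨f, u, hfu, hub⟩ := geometric_hahn_banach_point_closed hconv hclosed hnot
    have h0s : (0 : ι × ι → ℝ) ∈ s := ⟨0, Matrix.PosSemidef.zero, by funext p; simp⟩
    have hu0 : u < 0 := by simpa using hub 0 h0s
    -- f is nonnegative on s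
    have hfnn : ∀ X : Matrix ι ι ℝ, X.PosSemidef →
        0 ≤ f (fun p => if p ∈ E then X p.1 p.2 else 0) := by
      intro X hX
      by_contra hneg
      push_neg at hneg
      set c := f (fun p => if p ∈ E then X p.1 p.2 else 0) with hc
      have ht : 0 < u / c := div_pos_of_neg_of_neg hu0 hneg
      have hmem2 : ((u / c) • fun p : ι × ι => if p ∈ E then X p.1 p.2 else 0) ∈ s := by
        refine ⟨(u / c) • X, psdSmul hX ht.le, ?_⟩
        funext p
        by_cases hp : p ∈ E <;> simp [hp]
      have := hub _ hmem2
      rw [f.map_smul] at this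
      rw [smul_eq_mul, ← hc, div_mul_cancel₀ u (ne_of_lt hneg)] at this
      exact lt_irrefl u this
    -- linear functional representation
    set C0 : Matrix ι ι ℝ := Matrix.of (fun i j => f (Pi.single (i, j) 1)) with hC0
    have hrep : ∀ z : ι × ι → ℝ, f z = ∑ p : ι × ι, z p * C0 p.1 p.2 := by
      intro z
      have hz : z = ∑ p : ι × ι, z p • (Pi.single p 1 : ι × ι → ℝ) := by
        funext q
        rw [Finset.sum_apply]
        simp [Pi.single_apply]
      conv_lhs => rw [hz]
      rw [map_sum]
      refine Finset.sum_congr rfl fun p _ => ?_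
      rw [f.map_smul, smul_eq_mul]
      rfl
    -- the symmetrized separating matrix
    set D : Matrix ι ι ℝ :=
      Matrix.of (fun i j => if (i, j) ∈ E then (C0 i j + C0 j i) / 2 else 0) with hD
    have hDsupp : ∀ p : ι × ι, p ∉ E → D p.1 p.2 = 0 := by
      intro p hp
      simp only [hD, Matrix.of_apply]
      rw [if_neg]
      intro h
      exact hp h
    have hkey : ∀ X : Matrix ι ι ℝ, X.IsSymm →
        (Dᵀ * X).trace = f (fun p => if p ∈ E then X p.1 p.2 else 0) := by
      intro X hX
      rw [trace_form, hrep]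
      have hL : ∀ p : ι × ι, D p.1 p.2 * X p.1 p.2 =
          if p ∈ E then ((C0 p.1 p.2 + C0 p.2 p.1) / 2) * X p.1 p.2 else 0 := by
        intro p
        simp only [hD, Matrix.of_apply]
        by_cases hp : p ∈ E <;> simp [hp]
      have hR : ∀ p : ι × ι, (if p ∈ E then X p.1 p.2 else 0) * C0 p.1 p.2 =
          if p ∈ E then C0 p.1 p.2 * X p.1 p.2 else 0 := by
        intro p
        by_cases hp : p ∈ E <;> simp [hp, mul_comm]
      simp only [hL, hR, Finset.sum_ite_mem, Finset.univ_inter]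
      have hswap : ∑ p ∈ E, C0 p.2 p.1 * X p.1 p.2 = ∑ p ∈ E, C0 p.1 p.2 * X p.1 p.2 := by
        refine Finset.sum_nbij' (fun p => Prod.swap p) (fun p => Prod.swap p) ?_ ?_ ?_ ?_ ?_
        · intro p hp; exact hsymE p hp
        · intro p hp; exact hsymE p hp
        · intro p _; exact Prod.swap_swap p
        · intro p _; exact Prod.swap_swap p
        · intro p hp
          simp only [Prod.fst_swap, Prod.snd_swap]
          rw [hsymm_apply X hX p.1 p.2]
      have hterm : ∀ p ∈ E, ((C0 p.1 p.2 + C0 p.2 p.1) / 2) * X p.1 p.2 =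
          (C0 p.1 p.2 * X p.1 p.2 + C0 p.2 p.1 * X p.1 p.2) / 2 := by
        intro p _; ring
      rw [Finset.sum_congr rfl hterm, ← Finset.sum_div, Finset.sum_add_distrib, hswap]
      ring
    have hDpsd : D.PosSemidef := by
      apply posSemidef_of_quad
      · show Dᵀ = D
        ext i j
        simp only [Matrix.transpose_apply, hD, Matrix.of_apply]
        have hiff : (j, i) ∈ E ↔ (i, j) ∈ E :=
          ⟨fun h => hsymE (j, i) h, fun h => hsymE (i, j) h⟩
        by_cases hij : (i, j) ∈ E
        · rw [if_pos (hiff.mpr hij), if_pos hij]; ring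
        · rw [if_neg (fun h => hij (hiff.mp h)), if_neg hij]
      · intro v
        have hsymvv : (vecMulVec v v).IsSymm := by
          show (vecMulVec v v)ᵀ = _
          ext i j
          simp [vecMulVec_apply, mul_comm]
        have hq : v ⬝ᵥ D *ᵥ v = (Dᵀ * vecMulVec v v).trace := by
          rw [quad_form, trace_form]
          exact Finset.sum_congr rfl fun p _ => by rw [vecMulVec_apply]
        rw [hq, hkey _ hsymvv]
        exact hfnn _ (posSemidef_vecMulVec v)
    have h1 : 0 ≤ (Dᵀ * Y).trace := hcuts D hDpsd hDsupp
    rw [hkey Y hY] at h1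
    exact absurd (lt_trans hfu hu0) (not_lt.mpr h1)
  obtain ⟨X, hX, hXeq⟩ := hmem
  refine ⟨X, hX, fun p hp => ?_⟩
  have := congrFun hXeq p
  simpa [hp] using this.symm

end Stmt15

/-- `z^SDP = z^{SDP-E}`: the SDP relaxation with data supported on a symmetric
index set `E` (containing the diagonal), over a feasible set `𝒴` of symmetric
matrices whose membership depends only on the entries in `E`, has the same
optimal value whether one imposes `Y ⪰ 0` or only the E-PSD cuts
`⟨C, Y⟩ ≥ 0` for all PSD `C` supported on `E`. -/
theorem stmt_15 (n m : ℕ) (E : Finset (Fin (n+1) × Fin (n+1)))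
    (hdiag : ∀ i, (i, i) ∈ E) (hsymE : ∀ p ∈ E, (p.2, p.1) ∈ E)
    (Q0 : Matrix (Fin (n+1)) (Fin (n+1)) ℝ)
    (Q : Fin m → Matrix (Fin (n+1)) (Fin (n+1)) ℝ)
    (hQ0sym : Q0.IsSymm) (hQsym : ∀ k, (Q k).IsSymm)
    (hQ0supp : ∀ p : Fin (n+1) × Fin (n+1), p ∉ E → Q0 p.1 p.2 = 0)
    (hQsupp : ∀ k, ∀ p : Fin (n+1) × Fin (n+1), p ∉ E → Q k p.1 p.2 = 0)
    (𝒴 : Set (Matrix (Fin (n+1)) (Fin (n+1)) ℝ))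
    (h𝒴sym : ∀ Y ∈ 𝒴, Y.IsSymm)
    (h𝒴E : ∀ Y Y' : Matrix (Fin (n+1)) (Fin (n+1)) ℝ, Y ∈ 𝒴 → Y'.IsSymm →
      (∀ p : Fin (n+1) × Fin (n+1), p ∈ E → Y' p.1 p.2 = Y p.1 p.2) → Y' ∈ 𝒴) :
    sInf {v : ℝ | ∃ Y ∈ 𝒴, (∀ k, ((Q k)ᵀ * Y).trace ≤ 0) ∧
        Y.PosSemidef ∧ v = (Q0ᵀ * Y).trace} =
      sInf {v : ℝ | ∃ Y ∈ 𝒴, (∀ k, ((Q k)ᵀ * Y).trace ≤ 0) ∧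
        (∀ C : Matrix (Fin (n+1)) (Fin (n+1)) ℝ, C.PosSemidef →
          (∀ p : Fin (n+1) × Fin (n+1), p ∉ E → C p.1 p.2 = 0) →
          0 ≤ (Cᵀ * Y).trace) ∧
        v = (Q0ᵀ * Y).trace} := by
  congr 1
  ext v
  simp only [Set.mem_setOf_eq]
  constructor
  · rintro ⟨Y, hY𝒴, hk, hpsd, rfl⟩
    exact ⟨Y, hY𝒴, hk, fun C hC _ => Stmt15.trace_nonneg_of_posSemidef C Y hC hpsd, rfl⟩
  · rintro ⟨Y, hY𝒴, hk, hcuts, rfl⟩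
    have hYsym := h𝒴sym Y hY𝒴
    obtain ⟨X, hXpsd, hXeq⟩ := Stmt15.completion E hdiag hsymE Y hYsym hcuts
    have hXsym : X.IsSymm := by
      rw [Matrix.IsSymm, ← conjTranspose_eq_transpose_of_trivial, hXpsd.1]
    refine ⟨X, h𝒴E Y X hY𝒴 hXsym hXeq, ?_, hXpsd, ?_⟩
    · intro k
      rw [Stmt15.trace_eq_of_agree E (Q k) X Y (hQsupp k) hXeq]
      exact hk k
    · rw [Stmt15.trace_eq_of_agree E Q0 X Y hQ0supp hXeq]
end

section
/- Let D = S⁺ ∩ N be the cone of (n+1)×(n+1) doubly nonnegative matrices and let E be a symmetric index set containing the diagonal. Let Q⁰,…,Qᵐ be symmetric matrices supported on E and 𝒴 a set defined by linear conditions on entries in E only. Then inf{⟨Q⁰,Y⟩ : Y ∈ 𝒴, ⟨Q^k,Y⟩ ≤ 0 ∀k, Y ∈ D} equals inf{⟨Q⁰,Y⟩ : Y ∈ 𝒴, ⟨Q^k,Y⟩ ≤ 0 ∀k, ⟨C, Y⟩ ≥ 0 for all C ∈ D* ∩ H_E}, where D* = S⁺ + N and H_E is the set of symmetric matrices supported on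 E. -/
set_option linter.unusedSectionVars false
open Matrix Filter Topology
variable {F : Type*} [Fintype F] [DecidableEq F]

noncomputable def toH (A : Matrix F F ℝ) : EuclideanSpace ℝ (F × F) :=
  (WithLp.equiv 2 _).symm (fun p => A p.1 p.2)

@[simp] lemma toH_apply (A : Matrix F F ℝ) (p : F × F) : toH A p = A p.1 p.2 := rfl

lemma trace_formula (A B : Matrix F F ℝ) :
    (Aᵀ * B).trace = ∑ p : F × F, A p.1 p.2 * B p.1 p.2 := by
  rw [Fintype.sum_prod_type]
  simp [Matrix.trace, Matrix.diag, Matrix.mul_apply]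
  rw [Finset.sum_comm]

lemma inner_toH (A B : Matrix F F ℝ) :
    (inner ℝ (toH A) (toH B) : ℝ) = (Aᵀ * B).trace := by
  rw [trace_formula, PiLp.inner_apply]
  simp [RCLike.inner_apply, mul_comm]

lemma psd_diag_nonneg_s16 {A : Matrix F F ℝ} (hA : A.PosSemidef) (i : F) : 0 ≤ A i i := by
  simpa using hA.dotProduct_mulVec_nonneg (Pi.single i 1)

lemma psd_trace_mul_nonneg {A B : Matrix F F ℝ} (hA : A.PosSemidef) (hB : B.PosSemidef) :
    0 ≤ (A * B).trace := by
  obtain ⟨C, rfl⟩ : ∃ C : Matrix F F ℝ, A = Cᴴ * C := by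
    open scoped MatrixOrder in
    obtain ⟨C, hC⟩ := CStarAlgebra.nonneg_iff_eq_star_mul_self.mp hA.nonneg
    exact ⟨C, hC⟩
  rw [Matrix.mul_assoc, trace_mul_comm]
  have h : (C * B * Cᴴ).PosSemidef := by
    simpa using hB.conjTranspose_mul_mul_same Cᴴ
  rw [Matrix.trace]
  exact Finset.sum_nonneg fun i _ => psd_diag_nonneg_s16 h i

lemma psd_offdiag_bound {A : Matrix F F ℝ} (hA : A.PosSemidef) (i j : F) :
    |A i j| ≤ A i i + A j j := by
  have hsym : A j i = A i j := by
    have := hA.1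
    calc A j i = Aᴴ i j := by simp [conjTranspose_apply]
    _ = A i j := by rw [this]
  have h1 := hA.dotProduct_mulVec_nonneg (Pi.single i 1 + Pi.single j 1)
  have h2 := hA.dotProduct_mulVec_nonneg (Pi.single i 1 - Pi.single j 1)
  simp only [star_trivial, dotProduct, mulVec, Pi.add_apply, Pi.sub_apply,
    Pi.single_apply, mul_add, add_mul, mul_sub, sub_mul, Finset.sum_add_distrib,
    Finset.sum_sub_distrib, ite_mul, mul_ite, mul_zero, zero_mul, mul_one, one_mul,
    Finset.sum_ite_eq', Finset.mem_univ, if_true] at h1 h2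
  rw [abs_le]
  constructor <;> linarith

lemma abs_coord_le_norm {ι : Type*} [Fintype ι] (x : EuclideanSpace ℝ ι) (p : ι) : |x p| ≤ ‖x‖ := by
  rw [EuclideanSpace.norm_eq, ← Real.sqrt_sq_eq_abs]
  apply Real.sqrt_le_sqrt
  simpa [Real.norm_eq_abs, sq_abs] using
    Finset.single_le_sum (f := fun q => ‖x q‖^2) (fun q _ => sq_nonneg _) (Finset.mem_univ p)

lemma norm_le_of_coords {ι : Type*} [Fintype ι] (x : EuclideanSpace ℝ ι) (b : ℝ)
    (h : ∀ p, |x p| ≤ b) : ‖x‖ ≤ Real.sqrt (Fintype.card ι * b^2) := by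
  rw [EuclideanSpace.norm_eq]
  apply Real.sqrt_le_sqrt
  calc ∑ p, ‖x p‖^2 ≤ ∑ _p : ι, b^2 := Finset.sum_le_sum fun p _ => by
        rw [Real.norm_eq_abs]
        exact pow_le_pow_left₀ (abs_nonneg _) (h p) 2
  _ = Fintype.card ι * b^2 := by simp [mul_comm]

lemma tendsto_coord {ι : Type*} [Fintype ι] {u : ℕ → EuclideanSpace ℝ ι} {x : EuclideanSpace ℝ ι}
    (h : Tendsto u atTop (𝓝 x)) (p : ι) : Tendsto (fun k => u k p) atTop (𝓝 (x p)) := by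
  have := ((EuclideanSpace.proj (𝕜 := ℝ) p).continuous.tendsto x).comp h
  simpa [Function.comp_def] using this

lemma bdd_subseq {ι : Type*} [Fintype ι] (v : ℕ → EuclideanSpace ℝ ι) (b : ℝ)
    (hb : ∀ k p, |v k p| ≤ b) :
    ∃ a : EuclideanSpace ℝ ι, ∃ φ : ℕ → ℕ, StrictMono φ ∧ Tendsto (v ∘ φ) atTop (𝓝 a) := by
  have hbdd : Bornology.IsBounded (Set.range v) := by
    rw [isBounded_iff_forall_norm_le]
    exact ⟨Real.sqrt (Fintype.card ι * b^2), by
      rintro _ ⟨k, rfl⟩; exact norm_le_of_coords _ _ (hb k)⟩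
  obtain ⟨a, _, φ, hφ, ht⟩ := tendsto_subseq_of_bounded hbdd (fun k => Set.mem_range_self k)
  exact ⟨a, φ, hφ, ht⟩

lemma psd_of_tendsto (Z : ℕ → Matrix F F ℝ) (W : Matrix F F ℝ) (hZ : ∀ k, (Z k).PosSemidef)
    (h : ∀ i j, Tendsto (fun k => Z k i j) atTop (𝓝 (W i j))) : W.PosSemidef := by
  have hsk : ∀ k i j, Z k j i = Z k i j := by
    intro k i j
    have := congrFun (congrFun ((hZ k).1) i) j
    simpa [conjTranspose_apply] using this
  rw [posSemidef_iff_dotProduct_mulVec]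
  constructor
  · ext i j
    rw [conjTranspose_apply, star_trivial]
    exact tendsto_nhds_unique (h j i) ((h i j).congr fun k => (hsk k i j).symm)
  · intro v
    have ht : Tendsto (fun k => star v ⬝ᵥ (Z k) *ᵥ v) atTop (𝓝 (star v ⬝ᵥ W *ᵥ v)) := by
      simp only [dotProduct, mulVec, star_trivial, Finset.mul_sum]
      apply tendsto_finset_sum
      intro i _
      apply tendsto_finset_sum
      intro j _
      exact (((h i j).mul_const (v j)).const_mul (v i))
    exact ge_of_tendsto' ht (fun k => (hZ k).dotProduct_mulVec_nonneg v)

lemma psd_smul {A : Matrix F F ℝ} (hA : A.PosSemidef) {c : ℝ} (hc : 0 ≤ c) :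
    (c • A).PosSemidef := by
  rw [posSemidef_iff_dotProduct_mulVec]
  constructor
  · have h := hA.1
    ext i j
    simp only [conjTranspose_apply, Matrix.smul_apply, star_trivial, smul_eq_mul]
    rw [← star_trivial (A j i), ← conjTranspose_apply, h]
  · intro v
    have := hA.dotProduct_mulVec_nonneg v
    have h2 : star v ⬝ᵥ (c • A) *ᵥ v = c * (star v ⬝ᵥ A *ᵥ v) := by
      rw [smul_mulVec, dotProduct_smul]; simp
    rw [h2]
    exact mul_nonneg hc this

variable (E : Finset (F × F))

/-- projection onto E of the DNN cone, inside Euclidean space. -/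
noncomputable def coneK : ConvexCone ℝ (EuclideanSpace ℝ (F × F)) where
  carrier := {x | ∃ Z : Matrix F F ℝ, Z.PosSemidef ∧ (∀ i j, 0 ≤ Z i j) ∧
      ∀ p : F × F, x p = if p ∈ E then Z p.1 p.2 else 0}
  smul_mem' := by
    rintro c hc x ⟨Z, hZ1, hZ2, hZ3⟩
    refine ⟨c • Z, psd_smul hZ1 hc.le, fun i j => mul_nonneg hc.le (hZ2 i j), fun p => ?_⟩
    have : (c • x) p = c * x p := rfl
    rw [this, hZ3 p]
    by_cases hp : p ∈ E <;> simp [hp]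
  add_mem' := by
    rintro x ⟨Z, hZ1, hZ2, hZ3⟩ y ⟨W, hW1, hW2, hW3⟩
    refine ⟨Z + W, hZ1.add hW1, fun i j => add_nonneg (hZ2 i j) (hW2 i j), fun p => ?_⟩
    have : (x + y) p = x p + y p := rfl
    rw [this, hZ3 p, hW3 p]
    by_cases hp : p ∈ E <;> simp [hp]

/-- the cone S⁺ + N inside Euclidean space. -/
noncomputable def coneM : ConvexCone ℝ (EuclideanSpace ℝ (F × F)) where
  carrier := {x | ∃ P Nm : Matrix F F ℝ, P.PosSemidef ∧ Nm.IsSymm ∧ (∀ i j, 0 ≤ Nm i j) ∧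
      ∀ p : F × F, x p = P p.1 p.2 + Nm p.1 p.2}
  smul_mem' := by
    rintro c hc x ⟨P, Nm, h1, h2, h3, h4⟩
    refine ⟨c • P, c • Nm, psd_smul h1 hc.le, h2.smul c, fun i j => mul_nonneg hc.le (h3 i j),
      fun p => ?_⟩
    have : (c • x) p = c * x p := rfl
    rw [this, h4 p]
    simp [mul_add]
  add_mem' := by
    rintro x ⟨P, Nm, h1, h2, h3, h4⟩ y ⟨P', Nm', h1', h2', h3', h4'⟩
    refine ⟨P + P', Nm + Nm', h1.add h1', h2.add h2',
      fun i j => add_nonneg (h3 i j) (h3' i j), fun p => ?_⟩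
    have : (x + y) p = x p + y p := rfl
    rw [this, h4 p, h4' p]
    simp [Matrix.add_apply]
    ring

lemma coneK_closed (hdiag : ∀ i : F, (i,i) ∈ E) :
    IsClosed ((coneK E : ConvexCone ℝ (EuclideanSpace ℝ (F × F))) : Set (EuclideanSpace ℝ (F × F))) := by
  apply IsSeqClosed.isClosed
  intro u x hu hx
  choose Z hZ1 hZ2 hZ3 using hu
  obtain ⟨Cb, hCb⟩ := isBounded_iff_forall_norm_le.mp (Metric.isBounded_range_of_tendsto u hx)
  have hCb' : ∀ k p, |u k p| ≤ Cb := fun k p =>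
    (abs_coord_le_norm _ p).trans (hCb _ (Set.mem_range_self k))
  have hdiagB : ∀ k i, Z k i i ≤ Cb := by
    intro k i
    have h := hZ3 k (i, i)
    rw [if_pos (hdiag i)] at h
    calc Z k i i = u k (i,i) := h.symm
    _ ≤ |u k (i,i)| := le_abs_self _
    _ ≤ Cb := hCb' k (i,i)
  have hbd : ∀ k p, |toH (Z k) p| ≤ 2 * Cb := by
    intro k p
    rw [toH_apply]
    calc |Z k p.1 p.2| ≤ Z k p.1 p.1 + Z k p.2 p.2 := psd_offdiag_bound (hZ1 k) _ _
    _ ≤ 2 * Cb := by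
        have := hdiagB k p.1; have := hdiagB k p.2; linarith
  obtain ⟨a, φ, hφ, ht⟩ := bdd_subseq (fun k => toH (Z k)) (2*Cb) hbd
  have hcoord : ∀ i j, Tendsto (fun k => Z (φ k) i j) atTop (𝓝 (a (i,j))) := by
    intro i j
    simpa using tendsto_coord ht (i,j)
  refine ⟨Matrix.of fun i j => a (i,j),
    psd_of_tendsto (fun k => Z (φ k)) _ (fun k => hZ1 _) hcoord,
    fun i j => ge_of_tendsto' (hcoord i j) (fun k => hZ2 _ i j), fun p => ?_⟩
  have h1 : Tendsto (fun k => u (φ k) p) atTop (𝓝 (x p)) :=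
    tendsto_coord (hx.comp hφ.tendsto_atTop) p
  have h2 : Tendsto (fun k => u (φ k) p) atTop
      (𝓝 (if p ∈ E then (Matrix.of fun i j => a (i,j)) p.1 p.2 else 0)) := by
    by_cases hp : p ∈ E
    · simp only [if_pos hp]
      exact ((hcoord p.1 p.2).congr (fun k => by rw [hZ3 (φ k) p, if_pos hp]))
    · simp only [if_neg hp]
      have : (fun k => u (φ k) p) = fun _ => (0:ℝ) := by
        funext k; rw [hZ3 (φ k) p, if_neg hp]
      rw [this]
      exact tendsto_const_nhds
  exact tendsto_nhds_unique h1 h2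

lemma coneM_closed :
    IsClosed ((coneM (F := F) : ConvexCone ℝ (EuclideanSpace ℝ (F × F))) : Set (EuclideanSpace ℝ (F × F))) := by
  apply IsSeqClosed.isClosed
  intro u x hu hx
  choose P Nm h1 h2 h3 h4 using hu
  obtain ⟨Cb, hCb⟩ := isBounded_iff_forall_norm_le.mp (Metric.isBounded_range_of_tendsto u hx)
  have hCb' : ∀ k p, |u k p| ≤ Cb := fun k p =>
    (abs_coord_le_norm _ p).trans (hCb _ (Set.mem_range_self k))
  have hdiagB : ∀ k i, P k i i ≤ Cb := by
    intro k i
    have h := h4 k (i, i)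
    have hN := h3 k i i
    have := hCb' k (i,i)
    have habs := le_abs_self (u k (i,i))
    simp only at h
    linarith
  have hbd : ∀ k p, |toH (P k) p| ≤ 2 * Cb := by
    intro k p
    rw [toH_apply]
    calc |P k p.1 p.2| ≤ P k p.1 p.1 + P k p.2 p.2 := psd_offdiag_bound (h1 k) _ _
    _ ≤ 2 * Cb := by
        have := hdiagB k p.1; have := hdiagB k p.2; linarith
  obtain ⟨a, φ, hφ, ht⟩ := bdd_subseq (fun k => toH (P k)) (2*Cb) hbd
  have hcoord : ∀ i j, Tendsto (fun k => P (φ k) i j) atTop (𝓝 (a (i,j))) := by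
    intro i j
    simpa using tendsto_coord ht (i,j)
  have hucoord : ∀ p, Tendsto (fun k => u (φ k) p) atTop (𝓝 (x p)) :=
    fun p => tendsto_coord (hx.comp hφ.tendsto_atTop) p
  have hNcoord : ∀ i j, Tendsto (fun k => Nm (φ k) i j) atTop (𝓝 (x (i,j) - a (i,j))) := by
    intro i j
    have := (hucoord (i,j)).sub (hcoord i j)
    exact this.congr (fun k => by rw [h4 (φ k) (i,j)]; ring)
  refine ⟨Matrix.of fun i j => a (i,j), Matrix.of fun i j => x (i,j) - a (i,j),
    psd_of_tendsto (fun k => P (φ k)) _ (fun k => h1 _) hcoord, ?_,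
    fun i j => ge_of_tendsto' (hNcoord i j) (fun k => h3 _ i j), fun p => by simp⟩
  ext i j
  simp only [transpose_apply, Matrix.of_apply]
  have hs : ∀ k, Nm (φ k) j i = Nm (φ k) i j := by
    intro k
    have := congrFun (congrFun (h2 (φ k)) i) j
    simpa [transpose_apply] using this
  exact tendsto_nhds_unique ((hNcoord i j).congr (fun k => (hs k).symm)) (hNcoord j i) |>.symm

lemma inner_eq_sum (x y : EuclideanSpace ℝ (F × F)) : (inner ℝ x y : ℝ) = ∑ p : F × F, x p * y p := by
  simp [PiLp.inner_apply, RCLike.inner_apply, mul_comm]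

lemma psd_isSymm {A : Matrix F F ℝ} (hA : A.PosSemidef) : A.IsSymm := by
  rw [Matrix.IsSymm.ext_iff]
  intro i j
  have := congrFun (congrFun hA.1 i) j
  simpa [conjTranspose_apply] using this

lemma sum_mul_swap (A : Matrix F F ℝ) (hA : A.IsSymm) (y : F × F → ℝ) :
    ∑ p : F × F, A p.1 p.2 * y (p.2, p.1) = ∑ p : F × F, A p.1 p.2 * y p := by
  apply Fintype.sum_equiv (Equiv.prodComm F F)
  intro p
  simp only [Equiv.prodComm_apply, Prod.swap]
  rw [hA.apply p.2 p.1]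

lemma outer_psd (v : F → ℝ) : (Matrix.of fun i j => v i * v j).PosSemidef := by
  rw [posSemidef_iff_dotProduct_mulVec]
  constructor
  · rw [Matrix.IsHermitian]
    ext i j
    simp [conjTranspose_apply, mul_comm]
  · intro x
    simp only [star_trivial, dotProduct, mulVec, Matrix.of_apply]
    have hcalc : ∑ i, x i * ∑ j, (v i * v j) * x j = (∑ i, x i * v i) * (∑ j, x j * v j) := by
      rw [Finset.sum_mul_sum]
      apply Finset.sum_congr rfl
      intro i _
      rw [Finset.mul_sum]
      apply Finset.sum_congr rfl
      intro j _
      ring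
    rw [hcalc]
    exact mul_self_nonneg _

lemma half_swap_sum (A : Matrix F F ℝ) (hA : A.IsSymm) (w : F × F → ℝ) :
    ∑ p : F × F, A p.1 p.2 * ((w p + w (p.2,p.1))/2) = ∑ p : F × F, A p.1 p.2 * w p := by
  have h1 : ∀ p : F × F, A p.1 p.2 * ((w p + w (p.2,p.1))/2)
      = (A p.1 p.2 * w p + A p.1 p.2 * w (p.2,p.1))/2 := fun p => by ring
  rw [Finset.sum_congr rfl (fun p _ => h1 p), ← Finset.sum_div, Finset.sum_add_distrib,
    sum_mul_swap A hA w]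
  ring

lemma hsep_old {H : Type*} [NormedAddCommGroup H] [InnerProductSpace ℝ H] [CompleteSpace H]
    (K : ConvexCone ℝ H) (ne : (K : Set H).Nonempty) (hc : IsClosed (K : Set H)) {b : H}
    (disj : b ∉ K) : ∃ y, (∀ x ∈ K, 0 ≤ (inner ℝ x y : ℝ)) ∧ (inner ℝ y b : ℝ) < 0 := by
  lift K to ProperCone ℝ H using ⟨ne, hc⟩
  obtain ⟨y, h1, h2⟩ := ProperCone.hyperplane_separation' K disj
  exact ⟨y, h1, by rw [real_inner_comm]; exact h2⟩

lemma completion (E : Finset (F × F)) (hdiag : ∀ i : F, (i,i) ∈ E)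
    (hsymE : ∀ p ∈ E, (p.2, p.1) ∈ E) (Y : Matrix F F ℝ) (hYsym : Y.IsSymm)
    (hcuts : ∀ C : Matrix F F ℝ,
      (∃ P N : Matrix F F ℝ, P.PosSemidef ∧ N.IsSymm ∧ (∀ i j, 0 ≤ N i j) ∧ C = P + N) →
      (∀ p : F × F, p ∉ E → C p.1 p.2 = 0) → 0 ≤ (Cᵀ * Y).trace) :
    ∃ Y' : Matrix F F ℝ, Y'.PosSemidef ∧ (∀ i j, 0 ≤ Y' i j) ∧
      ∀ p ∈ E, Y' p.1 p.2 = Y p.1 p.2 := by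
  have hE : ∀ i j : F, (i,j) ∈ E ↔ (j,i) ∈ E :=
    fun i j => ⟨fun h => hsymE _ h, fun h => hsymE _ h⟩
  set b : EuclideanSpace ℝ (F × F) :=
    (WithLp.equiv 2 _).symm (fun p => if p ∈ E then Y p.1 p.2 else 0) with hbdef
  have hbapp : ∀ p, b p = if p ∈ E then Y p.1 p.2 else 0 := fun p => rfl
  have hKne : ((coneK E : ConvexCone ℝ _) : Set (EuclideanSpace ℝ (F × F))).Nonempty :=
    ⟨0, 0, Matrix.PosSemidef.zero, fun i j => le_refl 0, fun p => by simp⟩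
  have hb : b ∈ coneK E := by
    by_contra hb
    obtain ⟨y, hy1, hy2⟩ := hsep_old (coneK E)
      hKne (coneK_closed E hdiag) hb
    set C : Matrix F F ℝ :=
      Matrix.of (fun i j => if (i,j) ∈ E then (y (i,j) + y (j,i))/2 else 0) with hCdef
    have hCsym : C.IsSymm := by
      rw [Matrix.IsSymm.ext_iff]
      intro i j
      simp only [hCdef, Matrix.of_apply]
      by_cases h : (i,j) ∈ E
      · rw [if_pos h, if_pos ((hE i j).1 h)]; ring
      · rw [if_neg h, if_neg (fun hc => h ((hE j i).1 hc))]
    have hCsupp : ∀ p : F × F, p ∉ E → C p.1 p.2 = 0 := by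
      rintro ⟨i,j⟩ hp
      simp only [hCdef, Matrix.of_apply]
      rw [if_neg hp]
    have hkey : ∀ Z : Matrix F F ℝ, Z.IsSymm →
        ∑ p : F × F, C p.1 p.2 * Z p.1 p.2
          = ∑ p : F × F, (if p ∈ E then Z p.1 p.2 else 0) * y p := by
      intro Z hZ
      set A : Matrix F F ℝ := Matrix.of (fun i j => if (i,j) ∈ E then Z i j else 0) with hAdef
      have hAsym : A.IsSymm := by
        rw [Matrix.IsSymm.ext_iff]; intro i j
        simp only [hAdef, Matrix.of_apply]
        by_cases h : (i,j) ∈ E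
        · rw [if_pos h, if_pos ((hE i j).1 h), hZ.apply i j]
        · rw [if_neg h, if_neg (fun hc => h ((hE j i).1 hc))]
      have hterm : ∀ p : F × F, C p.1 p.2 * Z p.1 p.2
          = A p.1 p.2 * ((y p + y (p.2, p.1))/2) := by
        rintro ⟨i,j⟩
        simp only [hCdef, hAdef, Matrix.of_apply]
        by_cases h : (i,j) ∈ E
        · rw [if_pos h, if_pos h]; ring
        · rw [if_neg h, if_neg h]; ring
      rw [Finset.sum_congr rfl (fun p _ => hterm p), half_swap_sum A hAsym y]
      apply Finset.sum_congr rfl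
      rintro ⟨i,j⟩ _
      simp only [hAdef, Matrix.of_apply]
    have hCdual : ∀ Z : Matrix F F ℝ, Z.PosSemidef → (∀ i j, 0 ≤ Z i j) →
        0 ≤ ∑ p : F × F, C p.1 p.2 * Z p.1 p.2 := by
      intro Z hZ1 hZ2
      rw [hkey Z (psd_isSymm hZ1)]
      have hmem : ((WithLp.equiv 2 _).symm (fun p : F × F => if p ∈ E then Z p.1 p.2 else 0)
          : EuclideanSpace ℝ (F × F)) ∈ coneK E := ⟨Z, hZ1, hZ2, fun p => rfl⟩
      have h0 := hy1 _ hmem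
      rwa [inner_eq_sum] at h0
    have hCM : toH C ∈ coneM (F := F) := by
      by_contra hCM
      have hMne : ((coneM (F := F) : ConvexCone ℝ _) : Set (EuclideanSpace ℝ (F × F))).Nonempty := by
        refine ⟨0, 0, 0, Matrix.PosSemidef.zero, ?_, fun i j => le_refl 0, fun p => by simp⟩
        rw [Matrix.IsSymm]; simp
      obtain ⟨w, hw1, hw2⟩ :=
        hsep_old (coneM (F := F)) hMne coneM_closed hCM
      set W : Matrix F F ℝ := Matrix.of (fun i j => (w (i,j) + w (j,i))/2) with hWdef
      have hWapp : ∀ p : F × F, W p.1 p.2 = (w p + w (p.2,p.1))/2 := by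
        rintro ⟨i,j⟩; simp only [hWdef, Matrix.of_apply]
      have hWpsd : W.PosSemidef := by
        rw [posSemidef_iff_dotProduct_mulVec]
        constructor
        · rw [Matrix.IsHermitian]
          ext i j
          simp only [conjTranspose_apply, star_trivial, hWdef, Matrix.of_apply]
          ring
        · intro v
          set Av : Matrix F F ℝ := Matrix.of (fun i j => v i * v j) with hAvdef
          have hAvsym : Av.IsSymm := by
            rw [Matrix.IsSymm.ext_iff]; intro i j
            simp only [hAvdef, Matrix.of_apply]; ring
          have hm : toH Av ∈ coneM (F := F) := by
            refine ⟨Av, 0, outer_psd v, ?_, fun i j => le_refl 0, fun p => by simp⟩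
            rw [Matrix.IsSymm]; simp
          have h0 := hw1 _ hm
          rw [inner_eq_sum] at h0
          have hquad : star v ⬝ᵥ W *ᵥ v = ∑ p : F × F, Av p.1 p.2 * W p.1 p.2 := by
            simp only [star_trivial, dotProduct, mulVec, Fintype.sum_prod_type, hAvdef,
              Matrix.of_apply, Finset.mul_sum]
            apply Finset.sum_congr rfl; intro i _
            apply Finset.sum_congr rfl; intro j _
            ring
          rw [hquad, Finset.sum_congr rfl (fun p (_ : p ∈ Finset.univ) => by rw [hWapp p]),
            half_swap_sum Av hAvsym w]
          simpa using h0
      have hWnn : ∀ i j, 0 ≤ W i j := by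
        intro i j
        set Nij : Matrix F F ℝ := Matrix.of (fun a b =>
          (if (a,b) = (i,j) then (1:ℝ) else 0) + (if (a,b) = (j,i) then 1 else 0)) with hNdef
        have hNsym : Nij.IsSymm := by
          rw [Matrix.IsSymm.ext_iff]; intro a b
          have h1 : ((b,a) = (i,j)) ↔ ((a,b) = (j,i)) := by simp [Prod.ext_iff, and_comm]
          have h2 : ((b,a) = (j,i)) ↔ ((a,b) = (i,j)) := by simp [Prod.ext_iff, and_comm]
          simp only [hNdef, Matrix.of_apply]
          rw [if_congr h1 rfl rfl, if_congr h2 rfl rfl, add_comm]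
        have hNnn : ∀ a b, 0 ≤ Nij a b := by
          intro a b
          simp only [hNdef, Matrix.of_apply]
          refine add_nonneg ?_ ?_ <;> split <;> norm_num
        have hm : toH Nij ∈ coneM (F := F) :=
          ⟨0, Nij, Matrix.PosSemidef.zero, hNsym, hNnn, fun p => by simp⟩
        have h0 := hw1 _ hm
        rw [inner_eq_sum] at h0
        have hsum : ∑ p : F × F, toH Nij p * w p = w (i,j) + w (j,i) := by
          simp only [toH_apply, hNdef, Matrix.of_apply, Prod.mk.eta, add_mul, ite_mul,
            one_mul, zero_mul, Finset.sum_add_distrib, Finset.sum_ite_eq', Finset.mem_univ,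
            if_true]
        rw [hsum] at h0
        have : W i j = (w (i,j) + w (j,i))/2 := by simp only [hWdef, Matrix.of_apply]
        rw [this]
        linarith
      have h0 := hCdual W hWpsd hWnn
      rw [Finset.sum_congr rfl (fun p (_ : p ∈ Finset.univ) => by rw [hWapp p]),
        half_swap_sum C hCsym w] at h0
      rw [inner_eq_sum] at hw2
      have : ∑ p : F × F, w p * toH C p = ∑ p : F × F, C p.1 p.2 * w p :=
        Finset.sum_congr rfl (fun p _ => by rw [toH_apply]; ring)
      rw [this] at hw2
      linarith
    obtain ⟨P, Nm, hP, hNs, hNn, hco⟩ := hCM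
    have hdec : C = P + Nm := by
      ext i j
      have := hco (i,j)
      simpa [toH_apply, Matrix.add_apply] using this
    have h0 := hcuts C ⟨P, Nm, hP, hNs, hNn, hdec⟩ hCsupp
    rw [trace_formula, hkey Y hYsym] at h0
    rw [inner_eq_sum] at hy2
    have : ∑ p : F × F, (if p ∈ E then Y p.1 p.2 else 0) * y p = ∑ p : F × F, y p * b p :=
      Finset.sum_congr rfl (fun p _ => by rw [hbapp p]; ring)
    rw [this] at h0
    linarith
  obtain ⟨Z, hZ1, hZ2, hZ3⟩ := hb
  refine ⟨Z, hZ1, hZ2, fun p hp => ?_⟩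
  have h := hZ3 p
  rw [hbapp p, if_pos hp, if_pos hp] at h
  exact h.symm

/-- The doubly nonnegative analogue of `z^SDP = z^{SDP-E}`: with data supported
on a symmetric index set `E` containing the diagonal, imposing `Y ∈ D = S⁺ ∩ N`
gives the same optimal value as imposing only the cuts `⟨C, Y⟩ ≥ 0` for
`C ∈ D* ∩ H_E`, where `D* = S⁺ + N`. -/
theorem stmt_16 (n m : ℕ) (E : Finset (Fin (n+1) × Fin (n+1)))
    (hdiag : ∀ i, (i, i) ∈ E) (hsymE : ∀ p ∈ E, (p.2, p.1) ∈ E)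
    (Q0 : Matrix (Fin (n+1)) (Fin (n+1)) ℝ)
    (Q : Fin m → Matrix (Fin (n+1)) (Fin (n+1)) ℝ)
    (hQ0sym : Q0.IsSymm) (hQsym : ∀ k, (Q k).IsSymm)
    (hQ0supp : ∀ p : Fin (n+1) × Fin (n+1), p ∉ E → Q0 p.1 p.2 = 0)
    (hQsupp : ∀ k, ∀ p : Fin (n+1) × Fin (n+1), p ∉ E → Q k p.1 p.2 = 0)
    (𝒴 : Set (Matrix (Fin (n+1)) (Fin (n+1)) ℝ))
    (h𝒴sym : ∀ Y ∈ 𝒴, Y.IsSymm)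
    (h𝒴E : ∀ Y Y' : Matrix (Fin (n+1)) (Fin (n+1)) ℝ, Y ∈ 𝒴 → Y'.IsSymm →
      (∀ p : Fin (n+1) × Fin (n+1), p ∈ E → Y' p.1 p.2 = Y p.1 p.2) → Y' ∈ 𝒴) :
    sInf {v : ℝ | ∃ Y ∈ 𝒴, (∀ k, ((Q k)ᵀ * Y).trace ≤ 0) ∧
        Y.PosSemidef ∧ (∀ i j, 0 ≤ Y i j) ∧ v = (Q0ᵀ * Y).trace} =
      sInf {v : ℝ | ∃ Y ∈ 𝒴, (∀ k, ((Q k)ᵀ * Y).trace ≤ 0) ∧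
        (∀ C : Matrix (Fin (n+1)) (Fin (n+1)) ℝ,
          (∃ P N : Matrix (Fin (n+1)) (Fin (n+1)) ℝ,
            P.PosSemidef ∧ N.IsSymm ∧ (∀ i j, 0 ≤ N i j) ∧ C = P + N) →
          (∀ p : Fin (n+1) × Fin (n+1), p ∉ E → C p.1 p.2 = 0) →
          0 ≤ (Cᵀ * Y).trace) ∧
        v = (Q0ᵀ * Y).trace} := by
  have hsetseq : {v : ℝ | ∃ Y ∈ 𝒴, (∀ k, ((Q k)ᵀ * Y).trace ≤ 0) ∧
        Y.PosSemidef ∧ (∀ i j, 0 ≤ Y i j) ∧ v = (Q0ᵀ * Y).trace} =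
      {v : ℝ | ∃ Y ∈ 𝒴, (∀ k, ((Q k)ᵀ * Y).trace ≤ 0) ∧
        (∀ C : Matrix (Fin (n+1)) (Fin (n+1)) ℝ,
          (∃ P N : Matrix (Fin (n+1)) (Fin (n+1)) ℝ,
            P.PosSemidef ∧ N.IsSymm ∧ (∀ i j, 0 ≤ N i j) ∧ C = P + N) →
          (∀ p : Fin (n+1) × Fin (n+1), p ∉ E → C p.1 p.2 = 0) →
          0 ≤ (Cᵀ * Y).trace) ∧
        v = (Q0ᵀ * Y).trace} := by
    ext v
    constructor
    · rintro ⟨Y, hY𝒴, hQk, hpsd, hnn, rfl⟩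
      refine ⟨Y, hY𝒴, hQk, ?_, rfl⟩
      rintro C ⟨P, Nm, hP, hNs, hNn, rfl⟩ _
      rw [Matrix.transpose_add, Matrix.add_mul, Matrix.trace_add]
      have h1 : 0 ≤ (Pᵀ * Y).trace := by
        have hPt : Pᵀ = P := psd_isSymm hP
        rw [hPt]
        exact psd_trace_mul_nonneg hP hpsd
      have h2 : 0 ≤ (Nmᵀ * Y).trace := by
        rw [trace_formula]
        exact Finset.sum_nonneg fun p _ => mul_nonneg (hNn _ _) (hnn _ _)
      linarith
    · rintro ⟨Y, hY𝒴, hQk, hcuts, rfl⟩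
      obtain ⟨Y', hY'1, hY'2, hY'3⟩ := completion E hdiag hsymE Y (h𝒴sym Y hY𝒴) hcuts
      have hY'sym : Y'.IsSymm := psd_isSymm hY'1
      have hmem : Y' ∈ 𝒴 := h𝒴E Y Y' hY𝒴 hY'sym (fun p hp => hY'3 p hp)
      have htr : ∀ A : Matrix (Fin (n+1)) (Fin (n+1)) ℝ,
          (∀ p : Fin (n+1) × Fin (n+1), p ∉ E → A p.1 p.2 = 0) →
          (Aᵀ * Y').trace = (Aᵀ * Y).trace := by
        intro A hA
        rw [trace_formula, trace_formula]
        apply Finset.sum_congr rfl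
        intro p _
        by_cases hp : p ∈ E
        · rw [hY'3 p hp]
        · rw [hA p hp]; ring
      refine ⟨Y', hmem, fun k => ?_, hY'1, hY'2, ?_⟩
      · rw [htr (Q k) (hQsupp k)]; exact hQk k
      · exact (htr Q0 hQ0supp).symm
  rw [hsetseq]
end
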